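/- arXiv:1109.5229 — 3 statements merged into one kernel-verified Lean document; each statement's English description precedes it below -/
import Mathlib

section
/- Weak duality for the SDP relaxation of OPF with quadratic costs: let Y be an n×n complex matrix, and for each i let E_i be the single-entry matrix with 1 in position (i,i) and A_i := (1/2)(Yᴴ·E_i + E_i·Y). Let c₁, c₂ : Fin n → ℝ with c₂ ≥ 0, and V̲, V̄ : Fin n → ℝ. Let W be an n×n complex positive semidefinite matrix with V̲_i² ≤ Re(W_{ii}) ≤ V̄_i² for all i, and set P_i := Re(Tr(A_i·W)). Let λ̄, λ̲ : Fin n → ℝ be nonnegative, let z, u : Fin n → ℝ satisfy z_i² ≤ u_i for all i, and suppose the matrix Σ_i (c₁_i − 2·√(c₂_i)·z_i)·A_i + Λ is positive semidefinite, where Λ := diag(λ̄ − λ̲). Then Σ_i (−λ̄_i·V̄_i² + λ̲_i·V̲_i² − u_i) ≤ Σ_i (c₂_i·P_i² + c₁_i·P_i). -/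
open Matrix BigOperators
open scoped ComplexOrder

lemma trace_mul_psd_nonneg {n : ℕ} {M W : Matrix (Fin n) (Fin n) ℂ}
    (hM : M.PosSemidef) (hW : W.PosSemidef) : 0 ≤ ((M * W).trace).re := by
  open scoped MatrixOrder Matrix.Norms.L2Operator in obtain ⟨B, hB⟩ := CStarAlgebra.nonneg_iff_eq_star_mul_self.mp hW.nonneg
  have h1 : (M * W).trace = (B * M * Bᴴ).trace := by
    rw [hB, ← Matrix.mul_assoc, Matrix.trace_mul_cycle]; rfl
  have hN := hM.mul_mul_conjTranspose_same B
  have htr : (0 : ℂ) ≤ (B * M * Bᴴ).trace := by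
    rw [Matrix.trace]
    apply Finset.sum_nonneg
    intro i _
    have := hN.dotProduct_mulVec_nonneg (Pi.single i 1)
    simpa [Matrix.mulVec_single, dotProduct, Pi.single_apply, Matrix.diag] using this
  rw [h1]
  exact (Complex.le_def.mp htr).1

/-- Weak duality for the SDP relaxation of OPF with quadratic
costs: with `A i := (1/2)(Yᴴ·E i + E i·Y)`, `P i := Re (Tr (A i * W))`, dual
variables `λ̄, λ̲ ≥ 0`, `z, u` with `z i ^ 2 ≤ u i`, and
`Σ i (c₁ i − 2√(c₂ i)·z i)·A i + Λ ⪰ 0` where `Λ := diag (λ̄ − λ̲)`, one has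
`Σ i (−λ̄ i·V̄ i² + λ̲ i·V̲ i² − u i) ≤ Σ i (c₂ i·(P i)² + c₁ i·P i)`. -/
theorem weak_duality_sdp_opf_quadratic (n : ℕ) (hn : 0 < n)
    (Y : Matrix (Fin n) (Fin n) ℂ)
    (E : Fin n → Matrix (Fin n) (Fin n) ℂ)
    (hE : ∀ i, E i = Matrix.single i i 1)
    (A : Fin n → Matrix (Fin n) (Fin n) ℂ)
    (hA : ∀ i, A i = (1/2 : ℂ) • (Yᴴ * E i + E i * Y))
    (c₁ c₂ : Fin n → ℝ) (hc₂ : ∀ i, 0 ≤ c₂ i)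
    (Vlo Vhi : Fin n → ℝ)
    (W : Matrix (Fin n) (Fin n) ℂ) (hW : W.PosSemidef)
    (hWdiag : ∀ i, Vlo i ^ 2 ≤ (W i i).re ∧ (W i i).re ≤ Vhi i ^ 2)
    (P : Fin n → ℝ) (hP : ∀ i, P i = (((A i) * W).trace).re)
    (lamU lamL : Fin n → ℝ) (hlamU : ∀ i, 0 ≤ lamU i) (hlamL : ∀ i, 0 ≤ lamL i)
    (z u : Fin n → ℝ) (hzu : ∀ i, z i ^ 2 ≤ u i)
    (Λ : Matrix (Fin n) (Fin n) ℂ)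
    (hΛ : Λ = Matrix.diagonal fun i => ((lamU i - lamL i : ℝ) : ℂ))
    (hdual : (∑ i, (((c₁ i - 2 * Real.sqrt (c₂ i) * z i : ℝ) : ℂ) • A i) + Λ).PosSemidef) :
    ∑ i, (-(lamU i) * Vhi i ^ 2 + lamL i * Vlo i ^ 2 - u i)
      ≤ ∑ i, (c₂ i * P i ^ 2 + c₁ i * P i) := by
  set M := (∑ i, (((c₁ i - 2 * Real.sqrt (c₂ i) * z i : ℝ) : ℂ) • A i) + Λ) with hM
  set t : Fin n → ℝ := fun i =>
    (c₁ i - 2 * Real.sqrt (c₂ i) * z i) * P i + (lamU i - lamL i) * (W i i).re with ht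
  have htrace : ((M * W).trace).re = ∑ i, t i := by
    have hMW : (M * W).trace
        = ∑ i, (((c₁ i - 2 * Real.sqrt (c₂ i) * z i : ℝ) : ℂ) * ((A i * W).trace))
          + ∑ i, ((lamU i - lamL i : ℝ) : ℂ) * W i i := by
      rw [hM, hΛ, Matrix.add_mul, Matrix.trace_add, Finset.sum_mul]
      congr 1
      · rw [Matrix.trace_sum]
        congr 1; ext i
        rw [Matrix.smul_mul, Matrix.trace_smul, smul_eq_mul]
      · rw [Matrix.trace]
        congr 1; ext i
        simp [Matrix.diag, Matrix.diagonal_mul]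
    rw [hMW]
    simp only [Complex.add_re, Complex.re_sum, Complex.mul_re, Complex.ofReal_re,
      Complex.ofReal_im, zero_mul, sub_zero]
    simp [ht, Finset.sum_add_distrib, hP]
  have hkey : 0 ≤ ∑ i, t i := htrace ▸ trace_mul_psd_nonneg hdual hW
  have h2 : ∀ i ∈ Finset.univ,
      (-(lamU i) * Vhi i ^ 2 + lamL i * Vlo i ^ 2 - u i) + t i
        ≤ c₂ i * P i ^ 2 + c₁ i * P i := by
    intro i _
    simp only [ht]
    have hs := Real.sq_sqrt (hc₂ i)
    have h1 := mul_nonneg (hlamU i) (sub_nonneg.mpr (hWdiag i).2)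
    have h2 := mul_nonneg (hlamL i) (sub_nonneg.mpr (hWdiag i).1)
    nlinarith [sq_nonneg (Real.sqrt (c₂ i) * P i + z i), hzu i]
  calc ∑ i, (-(lamU i) * Vhi i ^ 2 + lamL i * Vlo i ^ 2 - u i)
      ≤ ∑ i, (-(lamU i) * Vhi i ^ 2 + lamL i * Vlo i ^ 2 - u i) + ∑ i, t i := by linarith
    _ = ∑ i, ((-(lamU i) * Vhi i ^ 2 + lamL i * Vlo i ^ 2 - u i) + t i) := by
        exact (Finset.sum_add_distrib).symm
    _ ≤ ∑ i, (c₂ i * P i ^ 2 + c₁ i * P i) := Finset.sum_le_sum h2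
end

section
/- Convexity of the subproblem value function in the shared variables: let M be an n×n Hermitian complex matrix, V̲, V̄ : Fin n → ℝ, and let S be a finite set of index pairs (the shared positions). For x : S → ℂ define the feasible set F(x) := { W : W is n×n complex positive semidefinite, V̲_i² ≤ Re(W_{ii}) ≤ V̄_i² for all i, and W_{p} = x(p) for all p ∈ S }, and define φ(x) := sInf { Re(Tr(M·W)) : W ∈ F(x) }. Then: (a) for every x with F(x) nonempty, the set { Re(Tr(M·W)) : W ∈ F(x) } is bounded below; and (b) for all x₁, x₂ with F(x₁) and F(x₂) nonempty and all t ∈ [0,1], F(t·x₁ + (1−t)·x₂) is nonempty and φ(t·x₁ + (1−t)·x₂) ≤ t·φ(x₁) + (1−t)·φ(x₂). -/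
open Matrix BigOperators
open scoped ComplexOrder

lemma psd_entry_sq_le' {n : ℕ} {W : Matrix (Fin n) (Fin n) ℂ} (hW : W.PosSemidef) (i j : Fin n) :
    ‖W i j‖ ^ 2 ≤ (W i i).re * (W j j).re := by
  open scoped MatrixOrder Matrix.Norms.L2Operator in
  obtain ⟨B, hB⟩ := CStarAlgebra.nonneg_iff_eq_star_mul_self.mp hW.nonneg
  rw [star_eq_conjTranspose] at hB
  subst hB
  let col : Fin n → EuclideanSpace ℂ (Fin n) := fun a => WithLp.toLp 2 (fun k => B k a)
  have h1 : ∀ a b : Fin n, (Bᴴ * B) a b = inner ℂ (col a) (col b) := by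
    intro a b
    simp [Matrix.mul_apply, Matrix.conjTranspose_apply, PiLp.inner_apply, RCLike.inner_apply,
      mul_comm, col]
  have h2 := norm_inner_le_norm (𝕜 := ℂ) (col i) (col j)
  have h3 : ∀ a : Fin n, (inner ℂ (col a) (col a) : ℂ).re = ‖col a‖ ^ 2 := by
    intro a
    rw [inner_self_eq_norm_sq_to_K]
    norm_cast
  rw [h1, h1, h1, h3, h3]
  calc ‖(inner ℂ (col i) (col j) : ℂ)‖ ^ 2 ≤ (‖col i‖ * ‖col j‖) ^ 2 :=
        pow_le_pow_left₀ (norm_nonneg _) h2 2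
    _ = _ := by ring

lemma inf_aux' {s : Set ℝ} (hs : s.Nonempty) {t c d : ℝ} (ht : 0 ≤ t)
    (h : ∀ a ∈ s, c ≤ t * a + d) : c ≤ t * sInf s + d := by
  rcases ht.eq_or_lt with h0 | h0
  · obtain ⟨a, ha⟩ := hs
    have := h a ha
    rw [← h0] at this ⊢
    linarith
  · have hlb : (c - d) / t ≤ sInf s := by
      apply le_csInf hs
      intro a ha
      rw [div_le_iff₀ h0]
      have := h a ha
      linarith
    rw [div_le_iff₀ h0] at hlb
    linarith

/-- Convexity of the subproblem value function in the shared
variables: with `F x` the set of SDP-feasible matrices agreeing with `x` on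
the shared positions `S`, and `φ x` the infimum of `Re (Tr (M·W))` over
`F x`: (a) for every `x` with `F x` nonempty the objective values are bounded
below, and (b) `F` has convex (nonempty) values along segments and `φ` is
convex. -/
theorem subproblem_value_function_convex (n : ℕ) (hn : 0 < n)
    (M : Matrix (Fin n) (Fin n) ℂ) (hM : M.IsHermitian)
    (Vlo Vhi : Fin n → ℝ)
    (S : Finset (Fin n × Fin n))
    (F : (S → ℂ) → Set (Matrix (Fin n) (Fin n) ℂ))
    (hF : ∀ x, F x = {W | W.PosSemidef ∧
        (∀ i, Vlo i ^ 2 ≤ (W i i).re ∧ (W i i).re ≤ Vhi i ^ 2) ∧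
        ∀ p : S, W (p : Fin n × Fin n).1 (p : Fin n × Fin n).2 = x p})
    (φ : (S → ℂ) → ℝ)
    (hφ : ∀ x, φ x = sInf ((fun W => ((M * W).trace).re) '' F x)) :
    (∀ x : S → ℂ, (F x).Nonempty →
        BddBelow ((fun W => ((M * W).trace).re) '' F x)) ∧
    ∀ (x₁ x₂ : S → ℂ), (F x₁).Nonempty → (F x₂).Nonempty →
      ∀ t : ℝ, t ∈ Set.Icc (0 : ℝ) 1 →
        (F (fun p => (t : ℂ) * x₁ p + ((1 - t : ℝ) : ℂ) * x₂ p)).Nonempty ∧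
        φ (fun p => (t : ℂ) * x₁ p + ((1 - t : ℝ) : ℂ) * x₂ p)
          ≤ t * φ x₁ + (1 - t) * φ x₂ := by
  set f : Matrix (Fin n) (Fin n) ℂ → ℝ := fun W => ((M * W).trace).re with hf
  -- Part (a): boundedness below.
  have ha : ∀ x : S → ℂ, (F x).Nonempty → BddBelow (f '' F x) := by
    intro x _
    refine ⟨-(∑ i, ∑ j, ‖M i j‖ * (|Vhi j| * |Vhi i|)), ?_⟩
    rintro y ⟨W, hW, rfl⟩
    rw [hF] at hW
    obtain ⟨hpsd, hdiag, -⟩ := hW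
    have hre : ∀ i, 0 ≤ (W i i).re ∧ (W i i).re ≤ Vhi i ^ 2 := fun i =>
      ⟨le_trans (sq_nonneg (Vlo i)) (hdiag i).1, (hdiag i).2⟩
    have hent : ∀ i j : Fin n, ‖W j i‖ ≤ |Vhi j| * |Vhi i| := by
      intro i j
      have h1 := psd_entry_sq_le' hpsd j i
      have h2 := hre i
      have h3 := hre j
      have hsq : ‖W j i‖ ^ 2 ≤ (|Vhi j| * |Vhi i|) ^ 2 := by
        calc ‖W j i‖ ^ 2 ≤ (W j j).re * (W i i).re := h1
          _ ≤ Vhi j ^ 2 * Vhi i ^ 2 := mul_le_mul h3.2 h2.2 h2.1 (sq_nonneg _)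
          _ = (|Vhi j| * |Vhi i|) ^ 2 := by rw [mul_pow, sq_abs, sq_abs]
      exact (pow_le_pow_iff_left₀ (norm_nonneg _)
        (mul_nonneg (abs_nonneg _) (abs_nonneg _)) two_ne_zero).mp hsq
    have htr : f W = ∑ i, ∑ j, (M i j * W j i).re := by
      simp [hf, Matrix.trace, Matrix.mul_apply, Matrix.diag, Complex.re_sum]
    rw [htr, ← Finset.sum_neg_distrib]
    refine Finset.sum_le_sum fun i _ => ?_
    rw [← Finset.sum_neg_distrib]
    refine Finset.sum_le_sum fun j _ => ?_
    have hz : -‖M i j * W j i‖ ≤ (M i j * W j i).re := by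
      have := Complex.abs_re_le_norm (M i j * W j i)
      cases abs_le.mp this
      linarith
    have hn' : ‖M i j * W j i‖ ≤ ‖M i j‖ * (|Vhi j| * |Vhi i|) := by
      rw [norm_mul]
      exact mul_le_mul_of_nonneg_left (hent i j) (norm_nonneg _)
    linarith
  refine ⟨ha, ?_⟩
  rintro x₁ x₂ ⟨W₁, hW₁⟩ ⟨W₂, hW₂⟩ t ⟨ht0, ht1⟩
  set xt : S → ℂ := fun p => (t : ℂ) * x₁ p + ((1 - t : ℝ) : ℂ) * x₂ p with hxt
  -- feasibility of convex combinations
  have key : ∀ A B : Matrix (Fin n) (Fin n) ℂ, A ∈ F x₁ → B ∈ F x₂ →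
      ((t:ℂ) • A + ((1-t:ℝ):ℂ) • B) ∈ F xt := by
    intro A B hA hB
    rw [hF] at hA hB ⊢
    obtain ⟨hA1, hA2, hA3⟩ := hA
    obtain ⟨hB1, hB2, hB3⟩ := hB
    refine ⟨?_, ?_, ?_⟩
    · refine Matrix.PosSemidef.of_dotProduct_mulVec_nonneg ?_ ?_
      · simp [Matrix.IsHermitian, conjTranspose_add, conjTranspose_smul, hA1.1.eq, hB1.1.eq,
          Complex.star_def, Complex.conj_ofReal]
      · intro y
        have h1 := hA1.dotProduct_mulVec_nonneg y
        have h2 := hB1.dotProduct_mulVec_nonneg y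
        have e : star y ⬝ᵥ ((t:ℂ) • A + ((1-t:ℝ):ℂ) • B) *ᵥ y
            = (t:ℂ) * (star y ⬝ᵥ A *ᵥ y) + ((1-t:ℝ):ℂ) * (star y ⬝ᵥ B *ᵥ y) := by
          simp [Matrix.add_mulVec, Matrix.smul_mulVec, dotProduct_add, dotProduct_smul,
            smul_eq_mul]
        rw [e]
        have ht0' : (0:ℂ) ≤ (t:ℂ) := by exact_mod_cast ht0
        have ht1' : (0:ℂ) ≤ ((1-t:ℝ):ℂ) := by
          have : (0:ℝ) ≤ 1 - t := by linarith
          exact_mod_cast this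
        exact add_nonneg (mul_nonneg ht0' h1) (mul_nonneg ht1' h2)
    · intro i
      have e : (((t:ℂ) • A + ((1-t:ℝ):ℂ) • B) i i).re
          = t * (A i i).re + (1-t) * (B i i).re := by
        simp [Matrix.add_apply, Matrix.smul_apply, smul_eq_mul, Complex.add_re,
          Complex.re_ofReal_mul]
      rw [e]
      have h1 := hA2 i
      have h2 := hB2 i
      constructor <;> nlinarith [h1.1, h1.2, h2.1, h2.2]
    · intro p
      simp only [Matrix.add_apply, Matrix.smul_apply, smul_eq_mul, hA3 p, hB3 p, hxt]
  -- linearity of the objective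
  have hlin : ∀ A B : Matrix (Fin n) (Fin n) ℂ,
      f ((t:ℂ) • A + ((1-t:ℝ):ℂ) • B) = t * f A + (1-t) * f B := by
    intro A B
    simp [hf, mul_add, mul_smul_comm, Matrix.trace_add, Matrix.trace_smul, smul_eq_mul,
      Complex.add_re, Complex.re_ofReal_mul]
  have hne : (F xt).Nonempty := ⟨_, key W₁ W₂ hW₁ hW₂⟩
  refine ⟨hne, ?_⟩
  have hbdd := ha xt hne
  have hne1 : (f '' F x₁).Nonempty := ⟨f W₁, ⟨W₁, hW₁, rfl⟩⟩
  have hne2 : (f '' F x₂).Nonempty := ⟨f W₂, ⟨W₂, hW₂, rfl⟩⟩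
  rw [hφ, hφ, hφ]
  show sInf (f '' F xt) ≤ t * sInf (f '' F x₁) + (1 - t) * sInf (f '' F x₂)
  apply inf_aux' hne1 ht0
  rintro a₁ ⟨Wa, hWa, rfl⟩
  have h2 : sInf (f '' F xt) ≤ (1 - t) * sInf (f '' F x₂) + t * f Wa := by
    apply inf_aux' hne2 (by linarith)
    rintro a₂ ⟨Wb, hWb, rfl⟩
    have hmem : f ((t:ℂ) • Wa + ((1-t:ℝ):ℂ) • Wb) ∈ f '' F xt :=
      ⟨_, key Wa Wb hWa hWb, rfl⟩
    have := csInf_le hbdd hmem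
    rw [hlin Wa Wb] at this
    linarith
  linarith
end

section
/- Concavity of the partially-maximized dual function J(z) in the quadratic-cost algorithm: let Y be an n×n complex matrix, A_i := (1/2)(Yᴴ·E_i + E_i·Y), c₁, c₂ : Fin n → ℝ with c₂ ≥ 0, and V̲, V̄ : Fin n → ℝ. For z : Fin n → ℝ, call (λ̄, λ̲) dual-feasible at z if λ̄, λ̲ : Fin n → ℝ are nonnegative and Σ_i (c₁_i − 2·√(c₂_i)·z_i)·A_i + diag(λ̄ − λ̲) is positive semidefinite, and let g(z, λ̄, λ̲) := Σ_i (−λ̄_i·V̄_i² + λ̲_i·V̲_i² − z_i²) and J(z) := sSup { g(z, λ̄, λ̲) : (λ̄, λ̲) dual-feasible at z }. Then for all z₁, z₂, all (λ̄₁, λ̲₁) dual-feasible at z₁ and (λ̄₂, λ̲₂) dual-feasible at z₂, and all t ∈ [0,1]: the pair (t·λ̄₁ + (1−t)·λ̄₂, t·λ̲₁ + (1−t)·λ̲₂) is dual-feasible at z_t := t·z₁ + (1−t)·z₂, and, provided the set { g(z_t, λ̄, λ̲) : (λ̄, λ̲) dual-feasible at z_t } is bounded above, t·g(z₁, λ̄₁,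 λ̲₁) + (1−t)·g(z₂, λ̄₂, λ̲₂) ≤ J(z_t). -/
open Matrix BigOperators
open scoped ComplexOrder

private lemma psd_real_smul {n : ℕ} {M : Matrix (Fin n) (Fin n) ℂ}
    (hM : M.PosSemidef) {t : ℝ} (ht : 0 ≤ t) : ((t : ℂ) • M).PosSemidef := by
  rw [posSemidef_iff_dotProduct_mulVec]
  constructor
  · show ((t : ℂ) • M)ᴴ = (t : ℂ) • M
    rw [conjTranspose_smul, hM.1.eq]
    simp [Complex.conj_ofReal]
  · intro x
    rw [smul_mulVec, dotProduct_smul, smul_eq_mul]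
    exact mul_nonneg (by exact_mod_cast ht) (hM.dotProduct_mulVec_nonneg x)

/-- Concavity of the partially-maximized dual function `J(z)` in
the quadratic-cost algorithm: convex combinations of dual-feasible multipliers
are dual-feasible at the convex combination of the `z`'s, and (when the value
set at `z_t` is bounded above) `t·g(z₁,λ̄₁,λ̲₁) + (1−t)·g(z₂,λ̄₂,λ̲₂) ≤ J(z_t)`. -/
theorem dual_function_J_concave (n : ℕ) (hn : 0 < n)
    (Y : Matrix (Fin n) (Fin n) ℂ)
    (E : Fin n → Matrix (Fin n) (Fin n) ℂ)
    (hE : ∀ i, E i = Matrix.single i i 1)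
    (A : Fin n → Matrix (Fin n) (Fin n) ℂ)
    (hA : ∀ i, A i = (1/2 : ℂ) • (Yᴴ * E i + E i * Y))
    (c₁ c₂ : Fin n → ℝ) (hc₂ : ∀ i, 0 ≤ c₂ i)
    (Vlo Vhi : Fin n → ℝ)
    (DF : (Fin n → ℝ) → (Fin n → ℝ) → (Fin n → ℝ) → Prop)
    (hDF : ∀ z lamU lamL, DF z lamU lamL ↔
        (∀ i, 0 ≤ lamU i) ∧ (∀ i, 0 ≤ lamL i) ∧
        ((∑ i, (((c₁ i - 2 * Real.sqrt (c₂ i) * z i : ℝ) : ℂ) • A i)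
            + Matrix.diagonal fun i => ((lamU i - lamL i : ℝ) : ℂ)).PosSemidef))
    (g : (Fin n → ℝ) → (Fin n → ℝ) → (Fin n → ℝ) → ℝ)
    (hg : ∀ z lamU lamL, g z lamU lamL
        = ∑ i, (-(lamU i) * Vhi i ^ 2 + lamL i * Vlo i ^ 2 - z i ^ 2))
    (J : (Fin n → ℝ) → ℝ)
    (hJ : ∀ z, J z = sSup {r : ℝ | ∃ lamU lamL,
        DF z lamU lamL ∧ r = g z lamU lamL}) :
    ∀ (z₁ z₂ lamU₁ lamL₁ lamU₂ lamL₂ : Fin n → ℝ),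
      DF z₁ lamU₁ lamL₁ → DF z₂ lamU₂ lamL₂ →
      ∀ t : ℝ, t ∈ Set.Icc (0 : ℝ) 1 →
        DF (fun i => t * z₁ i + (1 - t) * z₂ i)
          (fun i => t * lamU₁ i + (1 - t) * lamU₂ i)
          (fun i => t * lamL₁ i + (1 - t) * lamL₂ i) ∧
        (BddAbove {r : ℝ | ∃ lamU lamL,
            DF (fun i => t * z₁ i + (1 - t) * z₂ i) lamU lamL ∧
            r = g (fun i => t * z₁ i + (1 - t) * z₂ i) lamU lamL} →
          t * g z₁ lamU₁ lamL₁ + (1 - t) * g z₂ lamU₂ lamL₂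
            ≤ J (fun i => t * z₁ i + (1 - t) * z₂ i)) := by
  intro z₁ z₂ lamU₁ lamL₁ lamU₂ lamL₂ h₁ h₂ t ht
  obtain ⟨ht0, ht1⟩ := ht
  have ht1' : 0 ≤ 1 - t := by linarith
  rw [hDF] at h₁ h₂
  obtain ⟨hU₁, hL₁, hM₁⟩ := h₁
  obtain ⟨hU₂, hL₂, hM₂⟩ := h₂
  -- the matrix at the convex combination is the convex combination of matrices
  set M₁ := (∑ i, (((c₁ i - 2 * Real.sqrt (c₂ i) * z₁ i : ℝ) : ℂ) • A i)
      + Matrix.diagonal fun i => ((lamU₁ i - lamL₁ i : ℝ) : ℂ)) with hM₁def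
  set M₂ := (∑ i, (((c₁ i - 2 * Real.sqrt (c₂ i) * z₂ i : ℝ) : ℂ) • A i)
      + Matrix.diagonal fun i => ((lamU₂ i - lamL₂ i : ℝ) : ℂ)) with hM₂def
  have hmat : (∑ i, (((c₁ i - 2 * Real.sqrt (c₂ i) * (t * z₁ i + (1 - t) * z₂ i) : ℝ) : ℂ) • A i)
      + Matrix.diagonal fun i =>
        (((t * lamU₁ i + (1 - t) * lamU₂ i) - (t * lamL₁ i + (1 - t) * lamL₂ i) : ℝ) : ℂ))
      = (t : ℂ) • M₁ + ((1 - t : ℝ) : ℂ) • M₂ := by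
    rw [hM₁def, hM₂def]
    ext i j
    simp only [Matrix.add_apply, Matrix.smul_apply, Matrix.sum_apply, Matrix.diagonal_apply,
      smul_eq_mul]
    rw [mul_add, mul_add, add_add_add_comm, Finset.mul_sum, Finset.mul_sum,
      ← Finset.sum_add_distrib]
    congr 1
    · apply Finset.sum_congr rfl
      intro k _
      push_cast
      ring
    · split_ifs
      · push_cast; ring
      · simp
  have hfeas : DF (fun i => t * z₁ i + (1 - t) * z₂ i)
      (fun i => t * lamU₁ i + (1 - t) * lamU₂ i)
      (fun i => t * lamL₁ i + (1 - t) * lamL₂ i) := by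
    rw [hDF]
    refine ⟨fun i => by have := hU₁ i; have := hU₂ i; positivity,
      fun i => by have := hL₁ i; have := hL₂ i; positivity, ?_⟩
    rw [hmat]
    exact (psd_real_smul hM₁ ht0).add (psd_real_smul hM₂ ht1')
  refine ⟨hfeas, fun hbdd => ?_⟩
  have hmem : g (fun i => t * z₁ i + (1 - t) * z₂ i)
      (fun i => t * lamU₁ i + (1 - t) * lamU₂ i)
      (fun i => t * lamL₁ i + (1 - t) * lamL₂ i) ∈
      {r : ℝ | ∃ lamU lamL, DF (fun i => t * z₁ i + (1 - t) * z₂ i) lamU lamL ∧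
        r = g (fun i => t * z₁ i + (1 - t) * z₂ i) lamU lamL} :=
    ⟨_, _, hfeas, rfl⟩
  have hle : t * g z₁ lamU₁ lamL₁ + (1 - t) * g z₂ lamU₂ lamL₂
      ≤ g (fun i => t * z₁ i + (1 - t) * z₂ i)
        (fun i => t * lamU₁ i + (1 - t) * lamU₂ i)
        (fun i => t * lamL₁ i + (1 - t) * lamL₂ i) := by
    rw [hg, hg, hg, Finset.mul_sum, Finset.mul_sum, ← Finset.sum_add_distrib]
    apply Finset.sum_le_sum
    intro i _
    nlinarith [sq_nonneg (z₁ i - z₂ i), mul_nonneg ht0 ht1']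
  rw [hJ]
  exact hle.trans (le_csSup hbdd hmem)
end
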